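/- Define f₋(δ₀) = (1 - 6δ₀ + 8δ₀² - 8δ₀³ + 4δ₀⁴ - √(1 - 8δ₀ + 16δ₀² - 48δ₀³ + 120δ₀⁴ - 160δ₀⁵ + 128δ₀⁶ - 64δ₀⁷ + 16δ₀⁸))/(2(δ₀ - 1)) for δ₀ > 1. Then f₋(δ₀) < -1 for all δ₀ > 1, and f₋(δ₀) → -1 as δ₀ → ∞. -/

import Mathlib

open Filter

noncomputable def fMinusP (δ₀ : ℝ) : ℝ :=
  (1 - 6 * δ₀ + 8 * δ₀ ^ 2 - 8 * δ₀ ^ 3 + 4 * δ₀ ^ 4 -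
    Real.sqrt (1 - 8 * δ₀ + 16 * δ₀ ^ 2 - 48 * δ₀ ^ 3 + 120 * δ₀ ^ 4
      - 160 * δ₀ ^ 5 + 128 * δ₀ ^ 6 - 64 * δ₀ ^ 7 + 16 * δ₀ ^ 8)) /
  (2 * (δ₀ - 1))

noncomputable def sP (δ : ℝ) : ℝ := 4*δ^4 - 8*δ^3 + 8*δ^2 - 4*δ - 1

noncomputable def dP (δ : ℝ) : ℝ :=
  1 - 8 * δ + 16 * δ ^ 2 - 48 * δ ^ 3 + 120 * δ ^ 4
      - 160 * δ ^ 5 + 128 * δ ^ 6 - 64 * δ ^ 7 + 16 * δ ^ 8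

lemma dP_eq (δ : ℝ) : dP δ = sP δ ^ 2 + 16*δ*(δ-1) := by unfold dP sP; ring

lemma key (δ : ℝ) (h : 1 < δ) :
    0 < sP δ + Real.sqrt (dP δ) ∧
    fMinusP δ = -1 - 8*δ / (sP δ + Real.sqrt (dP δ)) := by
  have hD : 0 ≤ dP δ := by rw [dP_eq]; nlinarith [sq_nonneg (sP δ)]
  set r := Real.sqrt (dP δ) with hr
  have hr0 : 0 ≤ r := Real.sqrt_nonneg _
  have hr2 : r ^ 2 = dP δ := Real.sq_sqrt hD
  have hr2' : r ^ 2 = sP δ ^ 2 + 16*δ*(δ-1) := by rw [hr2, dP_eq]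
  have hpos : 0 < sP δ + r := by nlinarith [sq_nonneg (sP δ + r)]
  refine ⟨hpos, ?_⟩
  have h1 : (2 : ℝ) * (δ - 1) ≠ 0 := by nlinarith
  rw [fMinusP]
  have hrad : Real.sqrt (1 - 8 * δ + 16 * δ ^ 2 - 48 * δ ^ 3 + 120 * δ ^ 4
      - 160 * δ ^ 5 + 128 * δ ^ 6 - 64 * δ ^ 7 + 16 * δ ^ 8) = r := rfl
  rw [hrad]
  field_simp
  unfold sP at *
  rw [div_eq_iff (sub_ne_zero.mpr (ne_of_gt h))]
  linear_combination (-1:ℝ) * hr2'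

theorem stmt_8 :
    (∀ δ₀ : ℝ, 1 < δ₀ → fMinusP δ₀ < -1) ∧
    Tendsto fMinusP atTop (nhds (-1)) := by
  constructor
  · intro δ h
    obtain ⟨hpos, heq⟩ := key δ h
    have hδ : (0:ℝ) < δ := by linarith
    have : 0 < 8*δ / (sP δ + Real.sqrt (dP δ)) := div_pos (by linarith) hpos
    rw [heq]; linarith
  · have hg : Tendsto (fun δ : ℝ => 8*δ / (sP δ + Real.sqrt (dP δ))) atTop (nhds 0) := by
      apply squeeze_zero' (g := fun δ : ℝ => 8 / δ)
      · filter_upwards [eventually_ge_atTop (2:ℝ)] with δ hδ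
        have h1 : (1:ℝ) < δ := by linarith
        exact le_of_lt (div_pos (by linarith) ((key δ h1).1))
      · filter_upwards [eventually_ge_atTop (2:ℝ)] with δ hδ
        have h1 : (1:ℝ) < δ := by linarith
        have hS : δ^2 ≤ sP δ + Real.sqrt (dP δ) := by
          have := Real.sqrt_nonneg (dP δ)
          have h2 : (0:ℝ) ≤ 4*δ^3*(δ-2) := mul_nonneg (by positivity) (by linarith)
          unfold sP; nlinarith [this, h2, sq_nonneg δ]
        have hδ2 : (0:ℝ) < δ^2 := by positivity
        calc 8*δ / (sP δ + Real.sqrt (dP δ)) ≤ 8*δ / δ^2 :=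
              div_le_div_of_nonneg_left (by linarith) hδ2 hS
          _ = 8 / δ := by field_simp
      · simpa [div_eq_mul_inv] using tendsto_inv_atTop_zero.const_mul (8:ℝ)
    have : Tendsto (fun δ : ℝ => -1 - 8*δ / (sP δ + Real.sqrt (dP δ))) atTop (nhds (-1)) := by
      have := tendsto_const_nhds (x := (-1:ℝ)) (f := atTop).sub hg
      simpa using this
    refine this.congr' ?_
    filter_upwards [eventually_gt_atTop (1:ℝ)] with δ hδ
    exact ((key δ hδ).2).symm
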